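/- Assume E has a unique maximizer s* over {1,...,M+1} and that s* ≤ M. Then the optimal threshold admits the characterization s* = min { s ∈ {1,...,M} : E(s) ≥ E(s+1) }. -/

import Mathlib

open Finset

/-- Expected average reward `E(s)` of the threshold-`s` policy, for `1 ≤ s ≤ M`;
`E(M+1) = 0` corresponds to the always-inactive policy. -/
noncomputable def Ereward (M : ℕ) (p G P B : ℝ) (U : ℕ → ℝ) (s : ℕ) : ℝ :=
  if s = M + 1 then 0
  else ((s : ℝ) + (1 - p) / p)⁻¹ *
    ((∑ x ∈ Finset.Icc 1 (s - 1), U x)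
      + (∑ i ∈ Finset.range (M - s), U (s + i) * (1 - p) ^ i)
      - G / p - P + B)

noncomputable def Nval (M : ℕ) (p G P B : ℝ) (U : ℕ → ℝ) (s : ℕ) : ℝ :=
  (∑ x ∈ Finset.Icc 1 (s - 1), U x)
    + (∑ i ∈ Finset.range (M - s), U (s + i) * (1 - p) ^ i) - G / p - P + B

noncomputable def Tval (M : ℕ) (p : ℝ) (U : ℕ → ℝ) (s : ℕ) : ℝ :=
  ∑ i ∈ Finset.range (M - s - 1), U (s + 1 + i) * (1 - p) ^ i

lemma Ereward_eq (M s : ℕ) (p G P B : ℝ) (U : ℕ → ℝ) (h : s ≤ M) :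
    Ereward M p G P B U s = Nval M p G P B U s / ((s : ℝ) + (1 - p) / p) := by
  rw [Ereward, if_neg (by omega), inv_mul_eq_div, Nval]

lemma Nsucc (M s : ℕ) (p G P B : ℝ) (U : ℕ → ℝ) (hs : 1 ≤ s) (hsM : s + 1 ≤ M) :
    Nval M p G P B U (s + 1) = Nval M p G P B U s + p * Tval M p U s := by
  obtain ⟨t, rfl⟩ : ∃ t, s = t + 1 := ⟨s - 1, by omega⟩
  unfold Nval Tval
  obtain ⟨n, hn⟩ : ∃ n, M - (t + 1) - 1 = n := ⟨_, rfl⟩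
  have h1 : M - (t + 1 + 1) = n := by omega
  have h2 : M - (t + 1) = n + 1 := by omega
  rw [hn, h1, h2]
  have hIcc : ∑ x ∈ Finset.Icc 1 (t + 1), U x = (∑ x ∈ Finset.Icc 1 t, U x) + U (t + 1) :=
    Finset.sum_Icc_succ_top (by omega) U
  have hrange : ∑ i ∈ Finset.range (n + 1), U (t + 1 + i) * (1 - p) ^ i
      = (∑ i ∈ Finset.range n, U (t + 1 + 1 + i) * (1 - p) ^ i) * (1 - p) + U (t + 1) := by
    rw [Finset.sum_range_succ' (fun i => U (t + 1 + i) * (1 - p) ^ i) n]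
    rw [Finset.sum_mul]
    simp only [pow_zero, add_zero, mul_one]
    congr 1
    refine Finset.sum_congr rfl fun i _ => ?_
    have : t + 1 + (i + 1) = t + 1 + 1 + i := by omega
    rw [this]; ring
  simp only [Nat.add_sub_cancel, hIcc, hrange]
  ring

lemma Tnonneg (M s : ℕ) (p : ℝ) (U : ℕ → ℝ) (hp1 : p < 1)
    (hU : ∀ ⦃x y : ℕ⦄, 1 ≤ x → x ≤ y → y ≤ M → U y ≤ U x) (hUM : U M = 0) :
    0 ≤ Tval M p U s := by
  refine Finset.sum_nonneg fun i hi => ?_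
  have hi' := Finset.mem_range.mp hi
  have hU0 : 0 ≤ U (s + 1 + i) := by
    have := hU (x := s + 1 + i) (y := M) (by omega) (by omega) le_rfl
    linarith [hUM ▸ this]
  exact mul_nonneg hU0 (pow_nonneg (by linarith) i)

lemma Tmono (M s : ℕ) (p : ℝ) (U : ℕ → ℝ) (hp1 : p < 1)
    (hU : ∀ ⦃x y : ℕ⦄, 1 ≤ x → x ≤ y → y ≤ M → U y ≤ U x) (hUM : U M = 0) :
    Tval M p U (s + 1) ≤ Tval M p U s := by
  by_cases h : s + 2 ≤ M
  · obtain ⟨n, hn⟩ : ∃ n, M - (s + 1) - 1 = n := ⟨_, rfl⟩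
    have h2 : M - s - 1 = n + 1 := by omega
    unfold Tval
    rw [hn, h2, Finset.sum_range_succ]
    have hlast : 0 ≤ U (s + 1 + n) * (1 - p) ^ n := by
      have hU0 : 0 ≤ U (s + 1 + n) := by
        have := hU (x := s + 1 + n) (y := M) (by omega) (by omega) le_rfl
        linarith [hUM ▸ this]
      exact mul_nonneg hU0 (pow_nonneg (by linarith) n)
    have hsum : ∑ i ∈ Finset.range n, U (s + 1 + 1 + i) * (1 - p) ^ i
        ≤ ∑ i ∈ Finset.range n, U (s + 1 + i) * (1 - p) ^ i := by
      refine Finset.sum_le_sum fun i hi => ?_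
      have hi' := Finset.mem_range.mp hi
      have := hU (x := s + 1 + i) (y := s + 1 + 1 + i) (by omega) (by omega) (by omega)
      have hpow : (0:ℝ) ≤ (1 - p) ^ i := pow_nonneg (by linarith) i
      exact mul_le_mul_of_nonneg_right this hpow
    linarith
  · have h0 : M - (s + 1) - 1 = 0 := by omega
    unfold Tval
    rw [h0]
    simpa [Tval] using Tnonneg M s p U hp1 hU hUM

/-- If `E(s+1) ≤ E(s)`, then `p * T(s) ≤ E(s+1)`. -/
lemma lemA (M s : ℕ) (p G P B : ℝ) (U : ℕ → ℝ) (hp : 0 < p) (hp1 : p < 1)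
    (hs : 1 ≤ s) (hsM : s + 1 ≤ M)
    (h : Ereward M p G P B U (s + 1) ≤ Ereward M p G P B U s) :
    p * Tval M p U s ≤ Ereward M p G P B U (s + 1) := by
  have hc : 0 < (1 - p) / p := div_pos (by linarith) hp
  rw [Ereward_eq M (s+1) p G P B U (by omega), Nsucc M s p G P B U hs hsM] at h ⊢
  rw [Ereward_eq M s p G P B U (by omega)] at h
  rw [show ((s + 1 : ℕ) : ℝ) + (1 - p) / p = ((s : ℝ) + (1 - p) / p) + 1 from by
    push_cast; ring] at h ⊢
  set N := Nval M p G P B U s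
  set T := Tval M p U s
  set d := (s : ℝ) + (1 - p) / p with hdd
  have hd : 0 < d := by rw [hdd]; positivity
  rw [div_le_div_iff₀ (by linarith) hd] at h
  have hkey : p * T * d ≤ N := by nlinarith
  rw [le_div_iff₀ (by linarith)]
  nlinarith

/-- If `p * T(s) ≤ E(s)`, then `E(s+1) ≤ E(s)`. -/
lemma lemB (M s : ℕ) (p G P B : ℝ) (U : ℕ → ℝ) (hp : 0 < p) (hp1 : p < 1)
    (hs : 1 ≤ s) (hsM : s + 1 ≤ M)
    (h : p * Tval M p U s ≤ Ereward M p G P B U s) :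
    Ereward M p G P B U (s + 1) ≤ Ereward M p G P B U s := by
  have hc : 0 < (1 - p) / p := div_pos (by linarith) hp
  rw [Ereward_eq M (s+1) p G P B U (by omega), Nsucc M s p G P B U hs hsM]
  rw [Ereward_eq M s p G P B U (by omega)] at h ⊢
  rw [show ((s + 1 : ℕ) : ℝ) + (1 - p) / p = ((s : ℝ) + (1 - p) / p) + 1 from by
    push_cast; ring]
  set N := Nval M p G P B U s
  set T := Tval M p U s
  set d := (s : ℝ) + (1 - p) / p with hdd
  have hd : 0 < d := by rw [hdd]; positivity
  rw [le_div_iff₀ hd] at h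
  rw [div_le_div_iff₀ (by linarith) hd]
  nlinarith

/-- Propagation: once the reward starts decreasing it keeps decreasing. -/
lemma Eprop (M s : ℕ) (p G P B : ℝ) (U : ℕ → ℝ) (hp : 0 < p) (hp1 : p < 1)
    (hU : ∀ ⦃x y : ℕ⦄, 1 ≤ x → x ≤ y → y ≤ M → U y ≤ U x) (hUM : U M = 0)
    (hs : 1 ≤ s) (hsM : s + 1 ≤ M)
    (h : Ereward M p G P B U (s + 1) ≤ Ereward M p G P B U s) :
    Ereward M p G P B U (s + 2) ≤ Ereward M p G P B U (s + 1) := by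
  have h1 : p * Tval M p U s ≤ Ereward M p G P B U (s + 1) :=
    lemA M s p G P B U hp hp1 hs hsM h
  have h2 : p * Tval M p U (s + 1) ≤ Ereward M p G P B U (s + 1) := by
    have := Tmono M s p U hp1 hU hUM
    nlinarith
  by_cases hcase : s + 2 ≤ M
  · have := lemB M (s + 1) p G P B U hp hp1 (by omega) (by omega) h2
    simpa [show s + 1 + 1 = s + 2 by omega] using this
  · have hM : s + 1 = M := by omega
    have hE0 : Ereward M p G P B U (s + 2) = 0 := by
      rw [Ereward, if_pos (by omega)]
    rw [hE0]
    have hT0 : 0 ≤ Tval M p U (s + 1) := Tnonneg M (s + 1) p U hp1 hU hUM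
    nlinarith

/-- If `E` has a unique maximizer `s* ≤ M` over `{1,...,M+1}`, then
`s* = min { s ∈ {1,...,M} : E(s) ≥ E(s+1) }`. -/
theorem optimal_threshold_characterization (M sstar : ℕ) (p G P B : ℝ) (U : ℕ → ℝ)
    (hM : 2 ≤ M) (hp : 0 < p) (hp1 : p < 1)
    (hU : ∀ ⦃x y : ℕ⦄, 1 ≤ x → x ≤ y → y ≤ M → U y ≤ U x)
    (hUM : U M = 0)
    (hmem : sstar ∈ Finset.Icc 1 (M + 1))
    (hmax : ∀ t ∈ Finset.Icc 1 (M + 1), t ≠ sstar →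
      Ereward M p G P B U t < Ereward M p G P B U sstar)
    (hle : sstar ≤ M) :
    IsLeast {s : ℕ | 1 ≤ s ∧ s ≤ M ∧
      Ereward M p G P B U (s + 1) ≤ Ereward M p G P B U s} sstar := by
  rw [Finset.mem_Icc] at hmem
  constructor
  · refine ⟨hmem.1, hle, ?_⟩
    exact (hmax (sstar + 1) (Finset.mem_Icc.mpr ⟨by omega, by omega⟩) (by omega)).le
  · rintro s ⟨hs1, hsM, hsE⟩
    by_contra hlt
    push_neg at hlt
    have chain : ∀ k, s + k ≤ M →
        Ereward M p G P B U (s + k + 1) ≤ Ereward M p G P B U (s + k) := by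
      intro k
      induction k with
      | zero => intro _; simpa using hsE
      | succ k ih =>
        intro hk
        have h1 := ih (by omega)
        have h2 := Eprop M (s + k) p G P B U hp hp1 hU hUM (by omega) (by omega) h1
        have e1 : s + (k + 1) + 1 = s + k + 2 := by omega
        have e2 : s + (k + 1) = s + k + 1 := by omega
        rw [e1, e2]
        exact h2
    have chain2 : ∀ k, s + k ≤ M + 1 →
        Ereward M p G P B U (s + k) ≤ Ereward M p G P B U s := by
      intro k
      induction k with
      | zero => intro _; simp
      | succ k ih =>
        intro hk
        have e1 : s + (k + 1) = s + k + 1 := by omega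
        rw [e1]
        exact le_trans (chain k (by omega)) (ih (by omega))
    have hfin : Ereward M p G P B U sstar ≤ Ereward M p G P B U s := by
      have := chain2 (sstar - s) (by omega)
      rwa [show s + (sstar - s) = sstar by omega] at this
    have := hmax s (Finset.mem_Icc.mpr ⟨hs1, by omega⟩) (by omega)
    linarith
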